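/- If T is a D-convex left-continuous t-norm and I its residual implicator, then I is concave in its second argument: for all x, y₁, y₂, w ∈ [0,1], I(x, w·y₁ + (1−w)·y₂) ≥ w·I(x, y₁) + (1−w)·I(x, y₂). -/
import Mathlib


structure IsTNorm (T : ℝ → ℝ → ℝ) : Prop where
  maps_to : ∀ x ∈ Set.Icc (0:ℝ) 1, ∀ y ∈ Set.Icc (0:ℝ) 1, T x y ∈ Set.Icc (0:ℝ) 1
  comm : ∀ x ∈ Set.Icc (0:ℝ) 1, ∀ y ∈ Set.Icc (0:ℝ) 1, T x y = T y x
  assoc : ∀ x ∈ Set.Icc (0:ℝ) 1, ∀ y ∈ Set.Icc (0:ℝ) 1, ∀ z ∈ Set.Icc (0:ℝ) 1,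
      T (T x y) z = T x (T y z)
  mono : ∀ x₁ ∈ Set.Icc (0:ℝ) 1, ∀ x₂ ∈ Set.Icc (0:ℝ) 1, ∀ y₁ ∈ Set.Icc (0:ℝ) 1,
      ∀ y₂ ∈ Set.Icc (0:ℝ) 1, x₁ ≤ x₂ → y₁ ≤ y₂ → T x₁ y₁ ≤ T x₂ y₂
  one_left : ∀ x ∈ Set.Icc (0:ℝ) 1, T 1 x = x

/-- `T` is left-continuous: it commutes with suprema of nonempty subsets of `[0,1]`
in each (equivalently, by commutativity, the second) argument. -/
def LeftContinuousTNorm (T : ℝ → ℝ → ℝ) : Prop :=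
  ∀ x ∈ Set.Icc (0:ℝ) 1, ∀ S : Set ℝ, S.Nonempty → S ⊆ Set.Icc (0:ℝ) 1 →
    T x (sSup S) = sSup (T x '' S)

/-- The residual implicator of `T`: `I(x,y) = sup {λ ∈ [0,1] | T(x,λ) ≤ y}`. -/
noncomputable def resid (T : ℝ → ℝ → ℝ) (x y : ℝ) : ℝ :=
  sSup {l | l ∈ Set.Icc (0:ℝ) 1 ∧ T x l ≤ y}

/-- `T` is D-convex: convex in each argument separately on `[0,1]`. -/
def DConvex (T : ℝ → ℝ → ℝ) : Prop :=
  ∀ a ∈ Set.Icc (0:ℝ) 1, ∀ b ∈ Set.Icc (0:ℝ) 1, ∀ y ∈ Set.Icc (0:ℝ) 1, ∀ w ∈ Set.Icc (0:ℝ) 1,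
    T (w * a + (1 - w) * b) y ≤ w * T a y + (1 - w) * T b y ∧
    T y (w * a + (1 - w) * b) ≤ w * T y a + (1 - w) * T y b

section Aux

variable {T : ℝ → ℝ → ℝ} (hT : IsTNorm T)

lemma aux_Tx0 (hT : IsTNorm T) {x : ℝ} (hx : x ∈ Set.Icc (0:ℝ) 1) : T x 0 = 0 := by
  have h0 : (0:ℝ) ∈ Set.Icc (0:ℝ) 1 := by constructor <;> norm_num
  have h1 : (1:ℝ) ∈ Set.Icc (0:ℝ) 1 := by constructor <;> norm_num
  have hle : T x 0 ≤ T 1 0 := hT.mono x hx 1 h1 0 h0 0 h0 hx.2 le_rfl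
  have := hT.one_left 0 h0
  have hge := (hT.maps_to x hx 0 h0).1
  linarith

lemma aux_mem (hT : IsTNorm T) {x y : ℝ} (hx : x ∈ Set.Icc (0:ℝ) 1)
    (hy : y ∈ Set.Icc (0:ℝ) 1) :
    resid T x y ∈ Set.Icc (0:ℝ) 1 := by
  have h0mem : (0:ℝ) ∈ {l | l ∈ Set.Icc (0:ℝ) 1 ∧ T x l ≤ y} := by
    refine ⟨by constructor <;> norm_num, ?_⟩
    rw [aux_Tx0 hT hx]; exact hy.1
  have hbdd : BddAbove {l | l ∈ Set.Icc (0:ℝ) 1 ∧ T x l ≤ y} :=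
    ⟨1, fun l hl => hl.1.2⟩
  constructor
  · exact le_csSup hbdd h0mem
  · exact csSup_le ⟨0, h0mem⟩ fun l hl => hl.1.2

lemma aux_resid_le (hT : IsTNorm T) (hTlc : LeftContinuousTNorm T) {x y : ℝ}
    (hx : x ∈ Set.Icc (0:ℝ) 1) (hy : y ∈ Set.Icc (0:ℝ) 1) :
    T x (resid T x y) ≤ y := by
  set S := {l | l ∈ Set.Icc (0:ℝ) 1 ∧ T x l ≤ y} with hS
  have h0mem : (0:ℝ) ∈ S := by
    refine ⟨by constructor <;> norm_num, ?_⟩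
    rw [aux_Tx0 hT hx]; exact hy.1
  have hne : S.Nonempty := ⟨0, h0mem⟩
  have hsub : S ⊆ Set.Icc (0:ℝ) 1 := fun l hl => hl.1
  have heq := hTlc x hx S hne hsub
  rw [resid, ← hS, heq]
  exact csSup_le (hne.image _) (by rintro z ⟨l, hl, rfl⟩; exact hl.2)

end Aux

/-- the residual implicator of a D-convex left-continuous t-norm is
concave in its second argument. -/
theorem stmt13 (T : ℝ → ℝ → ℝ) (hT : IsTNorm T) (hTlc : LeftContinuousTNorm T)
    (hTconv : DConvex T) :
    ∀ x ∈ Set.Icc (0:ℝ) 1, ∀ y₁ ∈ Set.Icc (0:ℝ) 1, ∀ y₂ ∈ Set.Icc (0:ℝ) 1,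
      ∀ w ∈ Set.Icc (0:ℝ) 1,
        w * resid T x y₁ + (1 - w) * resid T x y₂ ≤ resid T x (w * y₁ + (1 - w) * y₂) := by
  intro x hx y₁ hy₁ y₂ hy₂ w hw
  set l₁ := resid T x y₁ with hl₁
  set l₂ := resid T x y₂ with hl₂
  have hm₁ := aux_mem hT hx hy₁
  have hm₂ := aux_mem hT hx hy₂
  rw [← hl₁] at hm₁
  rw [← hl₂] at hm₂
  have hw0 : 0 ≤ w := hw.1
  have hw1 : 0 ≤ 1 - w := by linarith [hw.2]
  have hlmem : w * l₁ + (1 - w) * l₂ ∈ Set.Icc (0:ℝ) 1 := by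
    constructor
    · exact add_nonneg (mul_nonneg hw0 hm₁.1) (mul_nonneg hw1 hm₂.1)
    · nlinarith [hm₁.1, hm₁.2, hm₂.1, hm₂.2]
  have hconv := (hTconv l₁ hm₁ l₂ hm₂ x hx w hw).2
  have h₁ : T x l₁ ≤ y₁ := aux_resid_le hT hTlc hx hy₁
  have h₂ : T x l₂ ≤ y₂ := aux_resid_le hT hTlc hx hy₂
  have hTle : T x (w * l₁ + (1 - w) * l₂) ≤ w * y₁ + (1 - w) * y₂ := by
    calc T x (w * l₁ + (1 - w) * l₂) ≤ w * T x l₁ + (1 - w) * T x l₂ := hconv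
    _ ≤ w * y₁ + (1 - w) * y₂ := by
        exact add_le_add (mul_le_mul_of_nonneg_left h₁ hw0)
          (mul_le_mul_of_nonneg_left h₂ hw1)
  have hbdd : BddAbove {l | l ∈ Set.Icc (0:ℝ) 1 ∧ T x l ≤ w * y₁ + (1 - w) * y₂} :=
    ⟨1, fun l hl => hl.1.2⟩
  exact le_csSup hbdd ⟨hlmem, hTle⟩
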